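/- Let α be a real number and let p, q be relatively prime integers with q ≥ 1 such that |α − p/q| ≤ 1/((2 − (q−1)/q²)·q²). Then p/q is a convergent of α, except in the single case where α = [a₀; 2] = a₀ + 1/2 for some integer a₀ and p/q = a₀ + 1. In that exceptional case equality holds in the hypothesis, i.e., |α − p/q| = 1/((2 − (q−1)/q²)·q²), and p/q is a nearest mediant of α. -/
import Mathlib


open GenContFract

/-- `x` is a convergent of the simple continued fraction expansion of `α`. -/
def Real.IsConvergentOf (α x : ℝ) : Prop :=
  ∃ n : ℕ, (GenContFract.of α).convs n = x

/-- `x` is a nearest mediant of `α`: a mediant `(b·pₙ + pₙ₋₁)/(b·qₙ + qₙ₋₁)` with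
`b` an integer, `1 ≤ b ≤ a_{n+1} - 1`, and moreover `b = 1` or `b = a_{n+1} - 1`.
Here `pₖ/qₖ` are the convergents of `α` and `a_{n+1}` is the `(n+1)`-st partial
quotient of `α` (which must exist). -/
def Real.IsNearestMediantOf (α x : ℝ) : Prop :=
  ∃ (n : ℕ) (b : ℤ) (a : ℝ),
    (GenContFract.of α).partDens.get? n = some a ∧
    1 ≤ b ∧ (b : ℝ) ≤ a - 1 ∧ ((b : ℝ) = 1 ∨ (b : ℝ) = a - 1) ∧
    x = ((b : ℝ) * ((GenContFract.of α).contsAux (n + 1)).a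
          + ((GenContFract.of α).contsAux n).a) /
        ((b : ℝ) * ((GenContFract.of α).contsAux (n + 1)).b
          + ((GenContFract.of α).contsAux n).b)

/-- `x` is a first mediant of `α`: a mediant `(b·pₙ + pₙ₋₁)/(b·qₙ + qₙ₋₁)` with `b = 1`,
where `1 ≤ a_{n+1} - 1`. -/
def Real.IsFirstMediantOf (α x : ℝ) : Prop :=
  ∃ (n : ℕ) (a : ℝ),
    (GenContFract.of α).partDens.get? n = some a ∧
    (1 : ℝ) ≤ a - 1 ∧
    x = (((GenContFract.of α).contsAux (n + 1)).a + ((GenContFract.of α).contsAux n).a) /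
        (((GenContFract.of α).contsAux (n + 1)).b + ((GenContFract.of α).contsAux n).b)

/-- The value of the finite simple continued fraction `[a; l₀, l₁, …]`. -/
noncomputable def cfVal : ℤ → List ℤ → ℝ
  | a, [] => (a : ℝ)
  | a, x :: xs => (a : ℝ) + 1 / cfVal x xs

/-- **Refined Legendre theorem (Theorem 1).** Let `p, q` be coprime integers with `q ≥ 1`
and `|α - p/q| ≤ 1/((2 - (q-1)/q²)·q²)`. Then `p/q` is a convergent of `α`, except in the
single case `α = [a₀; 2] = a₀ + 1/2` and `p/q = a₀ + 1`; in that case equality holds in the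
hypothesis and `p/q` is a nearest mediant of `α`. -/
theorem refined_legendre (α : ℝ) (p q : ℤ) (hq : 1 ≤ q) (hcop : Int.gcd p q = 1)
    (h : |α - (p : ℝ) / q| ≤ 1 / ((2 - ((q : ℝ) - 1) / (q : ℝ) ^ 2) * (q : ℝ) ^ 2)) :
    Real.IsConvergentOf α ((p : ℝ) / q) ∨
      ((∃ a₀ : ℤ, α = (a₀ : ℝ) + 1 / 2 ∧ (p : ℝ) / q = (a₀ : ℝ) + 1) ∧
        |α - (p : ℝ) / q| = 1 / ((2 - ((q : ℝ) - 1) / (q : ℝ) ^ 2) * (q : ℝ) ^ 2) ∧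
        Real.IsNearestMediantOf α ((p : ℝ) / q)) := by
  have hq0 : (0 : ℝ) < (q : ℝ) := by exact_mod_cast hq
  have hbound : (2 - ((q : ℝ) - 1) / (q : ℝ) ^ 2) * (q : ℝ) ^ 2
      = 2 * (q : ℝ) ^ 2 - q + 1 := by
    field_simp
    ring
  by_cases hex : q = 1 ∧ α - p = -(1 / 2)
  · -- exceptional case
    obtain ⟨hq1, hα⟩ := hex
    subst hq1
    right
    have hα' : α = ((p - 1 : ℤ) : ℝ) + 1 / 2 := by push_cast; linarith
    refine ⟨⟨p - 1, hα', by push_cast; ring⟩, ?_, ?_⟩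
    · rw [hbound]
      push_cast
      rw [div_one, hα]
      norm_num
    · -- nearest mediant
      have hfloor : ⌊α⌋ = p - 1 := by
        rw [hα']
        rw [show ((p - 1 : ℤ) : ℝ) + 1 / 2 = (1:ℝ)/2 + (p - 1 : ℤ) by ring]
        rw [Int.floor_add_intCast]
        norm_num
      have hfract : Int.fract α = 1 / 2 := by
        rw [Int.fract, hfloor]
        push_cast; linarith
      have hfne : Int.fract α ≠ 0 := by rw [hfract]; norm_num
      have hshead := GenContFract.of_s_head (v := α) hfne
      have hinv : (Int.fract α)⁻¹ = (2 : ℝ) := by rw [hfract]; norm_num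
      have hfl2 : ⌊(Int.fract α)⁻¹⌋ = 2 := by rw [hinv]; norm_num
      refine ⟨0, 1, 2, ?_, le_refl 1, by norm_num, Or.inl (by norm_num), ?_⟩
      · show ((GenContFract.of α).s.map Pair.b).get? 0 = some 2
        rw [Stream'.Seq.map_get?]
        rw [show (GenContFract.of α).s.get? 0 = (GenContFract.of α).s.head from rfl, hshead]
        simp [hfl2]
      · rw [GenContFract.zeroth_contAux_eq_one_zero, GenContFract.first_contAux_eq_h_one,
          GenContFract.of_h_eq_floor, hfloor]
        push_cast
        ring
  · -- main case: Legendre applies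
    left
    push_neg at hex
    have hqn : ((q.toNat : ℤ) : ℝ) = (q : ℝ) := by
      rw [Int.toNat_of_nonneg (by linarith)]
    have hass : Real.ContfracLegendre.Ass α p q.toNat := by
      refine ⟨?_, ?_, ?_⟩
      · rw [Int.toNat_of_nonneg (by linarith : (0:ℤ) ≤ q)]
        exact Int.isCoprime_iff_gcd_eq_one.mpr hcop
      · intro hv1
        have hq1 : q = 1 := by omega
        subst hq1
        have hb : |α - (p : ℝ)| ≤ 1 / 2 := by
          have := h
          rw [hbound] at this
          simpa using this
        have := hex rfl
        have h1 := (abs_le.mp hb).1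
        rcases lt_or_eq_of_le h1 with h' | h'
        · push_cast; linarith
        · exact absurd h'.symm this
      · rw [hqn]
        calc |α - (p : ℝ) / q| ≤ 1 / (2 * (q : ℝ) ^ 2 - q + 1) := by rw [hbound] at h; exact h
          _ < ((q : ℝ) * (2 * q - 1))⁻¹ := by
              have hq1 : (1 : ℝ) ≤ (q : ℝ) := by exact_mod_cast hq
              have hpos : (0 : ℝ) < (q : ℝ) * (2 * q - 1) := by
                nlinarith [mul_nonneg (by linarith : (0:ℝ) ≤ (q:ℝ) - 1)
                  (by linarith : (0:ℝ) ≤ 2 * (q:ℝ) - 1)]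
              rw [one_div]
              apply inv_strictAnti₀ hpos
              nlinarith
    obtain ⟨n, hn⟩ := Real.exists_rat_eq_convergent' hass
    refine ⟨n, ?_⟩
    rw [Real.convs_eq_convergent, ← hn]
    have hqn' : ((q.toNat : ℝ)) = (q : ℝ) := by exact_mod_cast hqn
    push_cast
    rw [hqn']
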